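/- Let d ≥ 1 and let E ⊆ ℝ^d be measurable with finite Lebesgue measure. If σ ∈ (0,1), then Ĥ^σ(E) = H^σ_1(E) + J^σ_1(E) as elements of (−∞,+∞], where H^σ(E) := ∫_E ∫_{ℝ^d∖E} |x−y|^{−(d+σ)} dy dx and Ĥ^σ(E) := H^σ(E) − (dω_d/σ)|E|. If σ ∈ (−d,0), then Ĵ^σ(E) = H^σ_1(E) + J^σ_1(E), where J^σ(E) := −∫_E ∫_E |x−y|^{−(d+σ)} dy dx and Ĵ^σ(E) := J^σ(E) − (dω_d/σ)|E|. -/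

import Mathlib

open MeasureTheory Metric Filter Topology ENNReal
open scoped symmDiff

noncomputable section

abbrev Rd (d : ℕ) := EuclideanSpace ℝ (Fin d)

/-- Lebesgue measure of the unit ball in `ℝ^d`. -/
def omegaD (d : ℕ) : ℝ := (volume (ball (0 : Rd d) 1)).toReal

/-- The kernel `|x-y|^{-(d+σ)}`. -/
def kerH (d : ℕ) (σ : ℝ) (x y : Rd d) : ℝ := ‖x - y‖ ^ (-((d : ℝ) + σ))

/-- `H^σ_ρ(E) = ∫_E ∫_{B_ρ(x)∖E} |x-y|^{-(d+σ)} dy dx ∈ [0,+∞]`. -/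
def Hfun (d : ℕ) (σ ρ : ℝ) (E : Set (Rd d)) : ℝ≥0∞ :=
  ∫⁻ x in E, ∫⁻ y in ball x ρ \ E, ENNReal.ofReal (kerH d σ x y)

/-- `J^σ_r(E) = -∫_E ∫_{E∖B_r(x)} |x-y|^{-(d+σ)} dy dx`. -/
def Jfun (d : ℕ) (σ r : ℝ) (E : Set (Rd d)) : ℝ :=
  -∫ x in E, ∫ y in E \ ball x r, kerH d σ x y

/-- `H^σ(E) = ∫_E ∫_{ℝ^d∖E} |x-y|^{-(d+σ)} dy dx`. -/
def HfunFull (d : ℕ) (σ : ℝ) (E : Set (Rd d)) : ℝ≥0∞ :=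
  ∫⁻ x in E, ∫⁻ y in Eᶜ, ENNReal.ofReal (kerH d σ x y)

/-- `J^σ(E) = -∫_E ∫_E |x-y|^{-(d+σ)} dy dx`. -/
def JfunFull (d : ℕ) (σ : ℝ) (E : Set (Rd d)) : ℝ :=
  -∫ x in E, ∫ y in E, kerH d σ x y

/-- `γ^σ = d ω_d / σ`. -/
def gamFull (d : ℕ) (σ : ℝ) : ℝ := d * omegaD d / σ

section AuxPolar

open Module Set

/-- lintegral version of `integral_fun_norm_addHaar`. -/
lemma lintegral_fun_norm_addHaar' {E : Type*} [NormedAddCommGroup E] [NormedSpace ℝ E]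
    [MeasurableSpace E] [BorelSpace E] [Nontrivial E] [FiniteDimensional ℝ E]
    (μ : Measure E) [μ.IsAddHaarMeasure] (f : ℝ → ℝ≥0∞) (hf : Measurable f) :
    ∫⁻ x, f ‖x‖ ∂μ
      = (finrank ℝ E : ℝ≥0∞) * μ (ball 0 1) *
        ∫⁻ y in Set.Ioi (0:ℝ), ENNReal.ofReal (y ^ (finrank ℝ E - 1)) * f y := by
  have h1 := lintegral_subtype_comap (μ := μ) (measurableSet_singleton (0:E)).compl
    (fun a => f ‖a‖)
  rw [MeasureTheory.restrict_compl_singleton] at h1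
  rw [← h1]
  have h2 : ∫⁻ x : ({0}ᶜ : Set E), f ‖x.1‖ ∂(μ.comap (↑))
      = ∫⁻ p : sphere (0:E) 1 × Set.Ioi (0:ℝ), f p.2.1
          ∂(μ.toSphere.prod (.volumeIoiPow (finrank ℝ E - 1))) := by
    rw [← μ.measurePreserving_homeomorphUnitSphereProd.lintegral_comp
      (by fun_prop : Measurable fun p : sphere (0:E) 1 × Set.Ioi (0:ℝ) => f p.2.1)]
    exact lintegral_congr fun x => by simp
  rw [h2, lintegral_prod _ (by fun_prop)]
  simp only [lintegral_const]
  rw [Measure.toSphere_apply_univ, Measure.volumeIoiPow,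
    lintegral_withDensity_eq_lintegral_mul _ (by fun_prop)
      (by fun_prop : Measurable fun y : Set.Ioi (0:ℝ) => f y.1)]
  simp only [Pi.mul_apply]
  rw [lintegral_subtype_comap measurableSet_Ioi
      (fun a => ENNReal.ofReal (a ^ (finrank ℝ E - 1)) * f a)]
  ring

variable {d : ℕ} {σ : ℝ}

lemma kerH_prod_meas (d : ℕ) (σ : ℝ) :
    Measurable (fun p : Rd d × Rd d => ENNReal.ofReal (kerH d σ p.1 p.2)) := by
  unfold kerH; fun_prop

lemma kerH_meas_y (d : ℕ) (σ : ℝ) (x : Rd d) :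
    Measurable (fun y => kerH d σ x y) := by
  unfold kerH; fun_prop

lemma kerH_nonneg (d : ℕ) (σ : ℝ) (x y : Rd d) : 0 ≤ kerH d σ x y :=
  Real.rpow_nonneg (norm_nonneg _) _

lemma omegaD_pos (d : ℕ) : 0 < omegaD d :=
  ENNReal.toReal_pos (measure_ball_pos volume (0 : Rd d) one_pos).ne' measure_ball_lt_top.ne

lemma volume_unit_ball_eq (d : ℕ) :
    volume (ball (0 : Rd d) 1) = ENNReal.ofReal (omegaD d) :=
  (ENNReal.ofReal_toReal measure_ball_lt_top.ne).symm

lemma nontrivial_Rd (hd : 1 ≤ d) : Nontrivial (Rd d) := by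
  have h : 0 < finrank ℝ (Rd d) := by
    rw [finrank_euclideanSpace_fin]; omega
  exact nontrivial_of_finrank_pos h

lemma lintegral_kerH_preimage (d : ℕ) (σ : ℝ) (x : Rd d) {s : Set (Rd d)}
    (hs : MeasurableSet s) :
    ∫⁻ y in (fun y => x - y) ⁻¹' s, ENNReal.ofReal (kerH d σ x y)
      = ∫⁻ z in s, ENNReal.ofReal (‖z‖ ^ (-((d : ℝ) + σ))) := by
  have hmp : MeasurePreserving (fun y : Rd d => x - y) volume volume :=
    Measure.measurePreserving_sub_left volume x
  have hgm : Measurable fun z : Rd d =>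
      s.indicator (fun z => ENNReal.ofReal (‖z‖ ^ (-((d : ℝ) + σ)))) z :=
    (by fun_prop : Measurable fun z : Rd d =>
      ENNReal.ofReal (‖z‖ ^ (-((d : ℝ) + σ)))).indicator hs
  calc ∫⁻ y in (fun y => x - y) ⁻¹' s, ENNReal.ofReal (kerH d σ x y)
      = ∫⁻ y, ((fun y => x - y) ⁻¹' s).indicator
          (fun y => ENNReal.ofReal (kerH d σ x y)) y :=
        (lintegral_indicator (hmp.measurable hs) _).symm
    _ = ∫⁻ y, s.indicator (fun z => ENNReal.ofReal (‖z‖ ^ (-((d : ℝ) + σ)))) (x - y) := by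
        refine lintegral_congr fun y => ?_
        by_cases h : x - y ∈ s
        · rw [Set.indicator_of_mem h,
            Set.indicator_of_mem (show y ∈ (fun y => x - y) ⁻¹' s from h)]
          rfl
        · rw [Set.indicator_of_notMem h,
            Set.indicator_of_notMem (show y ∉ (fun y => x - y) ⁻¹' s from h)]
    _ = ∫⁻ z, s.indicator (fun z => ENNReal.ofReal (‖z‖ ^ (-((d : ℝ) + σ)))) z :=
        hmp.lintegral_comp hgm
    _ = ∫⁻ z in s, ENNReal.ofReal (‖z‖ ^ (-((d : ℝ) + σ))) :=
        lintegral_indicator hs _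

lemma lintegral_kerH_compl_ball (hd : 1 ≤ d) (hσ : 0 < σ) (x : Rd d) :
    ∫⁻ y in (ball x 1)ᶜ, ENNReal.ofReal (kerH d σ x y)
      = ENNReal.ofReal (d * omegaD d / σ) := by
  haveI := nontrivial_Rd hd
  have hω := omegaD_pos d
  have hball : (ball x 1)ᶜ = (fun y => x - y) ⁻¹' (ball (0 : Rd d) 1)ᶜ := by
    ext y
    simp [mem_ball, mem_ball_zero_iff, dist_eq_norm, norm_sub_rev, not_lt]
  rw [hball, lintegral_kerH_preimage d σ x measurableSet_ball.compl]
  set f : ℝ → ℝ≥0∞ :=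
    (Ici (1:ℝ)).indicator (fun r => ENNReal.ofReal (r ^ (-((d : ℝ) + σ)))) with hfdef
  have hfm : Measurable f :=
    (by fun_prop : Measurable fun r : ℝ => ENNReal.ofReal (r ^ (-((d : ℝ) + σ)))).indicator
      measurableSet_Ici
  have h0 : ∫⁻ z in (ball (0 : Rd d) 1)ᶜ, ENNReal.ofReal (‖z‖ ^ (-((d : ℝ) + σ)))
      = ∫⁻ z : Rd d, f ‖z‖ := by
    rw [← lintegral_indicator measurableSet_ball.compl]
    refine lintegral_congr fun z => ?_
    simp only [hfdef]
    by_cases hz : (1:ℝ) ≤ ‖z‖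
    · rw [Set.indicator_of_mem
          (show z ∈ (ball (0 : Rd d) 1)ᶜ by simpa [mem_ball_zero_iff, not_lt] using hz),
        Set.indicator_of_mem (show ‖z‖ ∈ Ici (1:ℝ) from hz)]
    · rw [Set.indicator_of_notMem
          (show z ∉ (ball (0 : Rd d) 1)ᶜ from fun h =>
            hz (by simpa [mem_ball_zero_iff, not_lt] using h)),
        Set.indicator_of_notMem (show ‖z‖ ∉ Ici (1:ℝ) from hz)]
  rw [h0, lintegral_fun_norm_addHaar' volume f hfm, finrank_euclideanSpace_fin]
  have hrad : ∀ y ∈ Ioi (0:ℝ), ENNReal.ofReal (y ^ (d - 1)) * f y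
      = (Ici (1:ℝ)).indicator (fun r => ENNReal.ofReal (r ^ (-1 - σ))) y := by
    intro y hy
    have hy0 : (0:ℝ) < y := hy
    simp only [hfdef]
    by_cases h1 : (1:ℝ) ≤ y
    · rw [Set.indicator_of_mem (show y ∈ Ici (1:ℝ) from h1),
        Set.indicator_of_mem (show y ∈ Ici (1:ℝ) from h1),
        ← ENNReal.ofReal_mul (by positivity)]
      congr 1
      rw [← Real.rpow_natCast y (d - 1), ← Real.rpow_add hy0]
      congr 1
      have hcast : ((d - 1 : ℕ) : ℝ) = (d : ℝ) - 1 := by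
        rw [Nat.cast_sub hd]; norm_num
      rw [hcast]; ring
    · rw [Set.indicator_of_notMem (show y ∉ Ici (1:ℝ) from h1),
        Set.indicator_of_notMem (show y ∉ Ici (1:ℝ) from h1), mul_zero]
  rw [setLIntegral_congr_fun measurableSet_Ioi hrad,
    lintegral_indicator measurableSet_Ici, Measure.restrict_restrict measurableSet_Ici]
  have hIci : Ici (1:ℝ) ∩ Ioi 0 = Ici 1 :=
    Set.inter_eq_left.mpr (fun y hy => Set.mem_Ioi.mpr (lt_of_lt_of_le one_pos hy))
  rw [hIci]
  have hint : IntegrableOn (fun y : ℝ => y ^ (-1 - σ)) (Ici (1:ℝ)) := by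
    rw [integrableOn_Ici_iff_integrableOn_Ioi]
    exact integrableOn_Ioi_rpow_of_lt (by linarith) one_pos
  rw [← ofReal_integral_eq_lintegral_ofReal hint ?_]
  · rw [MeasureTheory.integral_Ici_eq_integral_Ioi,
      integral_Ioi_rpow_of_lt (by linarith) one_pos, Real.one_rpow,
      show ((d:ℝ≥0∞)) = ENNReal.ofReal (d:ℝ) by simp, volume_unit_ball_eq d,
      ← ENNReal.ofReal_mul (by positivity), ← ENNReal.ofReal_mul (by positivity)]
    congr 1
    rw [show (-1 - σ + 1 : ℝ) = -σ by ring, neg_div_neg_eq, mul_one_div]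
  · filter_upwards [ae_restrict_mem measurableSet_Ici] with y hy
    exact Real.rpow_nonneg (le_trans zero_le_one hy) _

open intervalIntegral in
lemma lintegral_kerH_ball (hd : 1 ≤ d) (hσd : -(d:ℝ) < σ) (hσ : σ < 0) (x : Rd d) :
    ∫⁻ y in ball x 1, ENNReal.ofReal (kerH d σ x y)
      = ENNReal.ofReal (d * omegaD d / (-σ)) := by
  haveI := nontrivial_Rd hd
  have hω := omegaD_pos d
  have hball : ball x 1 = (fun y => x - y) ⁻¹' (ball (0 : Rd d) 1) := by
    ext y
    simp [mem_ball, mem_ball_zero_iff, dist_eq_norm, norm_sub_rev]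
  rw [hball, lintegral_kerH_preimage d σ x measurableSet_ball]
  set f : ℝ → ℝ≥0∞ :=
    (Iio (1:ℝ)).indicator (fun r => ENNReal.ofReal (r ^ (-((d : ℝ) + σ)))) with hfdef
  have hfm : Measurable f :=
    (by fun_prop : Measurable fun r : ℝ => ENNReal.ofReal (r ^ (-((d : ℝ) + σ)))).indicator
      measurableSet_Iio
  have h0 : ∫⁻ z in ball (0 : Rd d) 1, ENNReal.ofReal (‖z‖ ^ (-((d : ℝ) + σ)))
      = ∫⁻ z : Rd d, f ‖z‖ := by
    rw [← lintegral_indicator measurableSet_ball]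
    refine lintegral_congr fun z => ?_
    simp only [hfdef]
    by_cases hz : ‖z‖ < 1
    · rw [Set.indicator_of_mem (show z ∈ ball (0 : Rd d) 1 by simpa [mem_ball_zero_iff] using hz),
        Set.indicator_of_mem (show ‖z‖ ∈ Iio (1:ℝ) from hz)]
    · rw [Set.indicator_of_notMem
          (show z ∉ ball (0 : Rd d) 1 from fun h => hz (by simpa [mem_ball_zero_iff] using h)),
        Set.indicator_of_notMem (show ‖z‖ ∉ Iio (1:ℝ) from hz)]
  rw [h0, lintegral_fun_norm_addHaar' volume f hfm, finrank_euclideanSpace_fin]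
  have hrad : ∀ y ∈ Ioi (0:ℝ), ENNReal.ofReal (y ^ (d - 1)) * f y
      = (Iio (1:ℝ)).indicator (fun r => ENNReal.ofReal (r ^ (-1 - σ))) y := by
    intro y hy
    have hy0 : (0:ℝ) < y := hy
    simp only [hfdef]
    by_cases h1 : y < 1
    · rw [Set.indicator_of_mem (show y ∈ Iio (1:ℝ) from h1),
        Set.indicator_of_mem (show y ∈ Iio (1:ℝ) from h1),
        ← ENNReal.ofReal_mul (by positivity)]
      congr 1
      rw [← Real.rpow_natCast y (d - 1), ← Real.rpow_add hy0]
      congr 1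
      have hcast : ((d - 1 : ℕ) : ℝ) = (d : ℝ) - 1 := by
        rw [Nat.cast_sub hd]; norm_num
      rw [hcast]; ring
    · rw [Set.indicator_of_notMem (show y ∉ Iio (1:ℝ) from h1),
        Set.indicator_of_notMem (show y ∉ Iio (1:ℝ) from h1), mul_zero]
  rw [setLIntegral_congr_fun measurableSet_Ioi hrad,
    lintegral_indicator measurableSet_Iio, Measure.restrict_restrict measurableSet_Iio]
  have hIoo : Iio (1:ℝ) ∩ Ioi 0 = Ioo 0 1 := by
    rw [Set.inter_comm]; exact Set.Ioi_inter_Iio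
  rw [hIoo]
  have hII : IntervalIntegrable (fun y : ℝ => y ^ (-1 - σ)) volume 0 1 :=
    intervalIntegrable_rpow' (by linarith)
  have hint : IntegrableOn (fun y : ℝ => y ^ (-1 - σ)) (Ioo (0:ℝ) 1) :=
    ((intervalIntegrable_iff_integrableOn_Ioc_of_le zero_le_one).1 hII).mono_set
      Set.Ioo_subset_Ioc_self
  rw [← ofReal_integral_eq_lintegral_ofReal hint ?_]
  · rw [setIntegral_congr_set Ioo_ae_eq_Ioc,
      ← integral_of_le zero_le_one,
      integral_rpow (Or.inl (by linarith)),
      Real.one_rpow, Real.zero_rpow (by linarith : -1 - σ + 1 ≠ 0),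
      show ((d:ℝ≥0∞)) = ENNReal.ofReal (d:ℝ) by simp, volume_unit_ball_eq d,
      ← ENNReal.ofReal_mul (by positivity), ← ENNReal.ofReal_mul (by positivity)]
    congr 1
    rw [show (-1 - σ + 1 : ℝ) = -σ by ring, sub_zero, mul_one_div]
  · filter_upwards [ae_restrict_mem measurableSet_Ioo] with y hy
    exact Real.rpow_nonneg hy.1.le _

lemma measurable_lintegral_section (d : ℕ) (σ : ℝ) {A : Set (Rd d × Rd d)}
    (hA : MeasurableSet A) :
    Measurable fun x : Rd d => ∫⁻ y in {y | (x, y) ∈ A}, ENNReal.ofReal (kerH d σ x y) := by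
  have h : ∀ x : Rd d, ∫⁻ y in {y | (x, y) ∈ A}, ENNReal.ofReal (kerH d σ x y)
      = ∫⁻ y, (A.indicator fun p => ENNReal.ofReal (kerH d σ p.1 p.2)) (x, y) := by
    intro x
    have h1 : ∫⁻ y in {y | (x, y) ∈ A}, ENNReal.ofReal (kerH d σ x y)
        = ∫⁻ y, ({y | (x, y) ∈ A}).indicator (fun y => ENNReal.ofReal (kerH d σ x y)) y :=
      (lintegral_indicator (measurable_prodMk_left hA) _).symm
    rw [h1]
    refine lintegral_congr fun y => ?_
    by_cases hxy : (x, y) ∈ A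
    · rw [Set.indicator_of_mem (show y ∈ {y | (x, y) ∈ A} from hxy),
        Set.indicator_of_mem hxy]
    · rw [Set.indicator_of_notMem (show y ∉ {y | (x, y) ∈ A} from hxy),
        Set.indicator_of_notMem hxy]
  simp_rw [h]
  exact ((kerH_prod_meas d σ).indicator hA).lintegral_prod_right'

lemma measurable_lintegral_section' (d : ℕ) (σ : ℝ) {A : Set (Rd d × Rd d)}
    (hA : MeasurableSet A) (s : Rd d → Set (Rd d)) (hs : ∀ x, s x = {y | (x, y) ∈ A}) :
    Measurable fun x : Rd d => ∫⁻ y in s x, ENNReal.ofReal (kerH d σ x y) := by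
  have h : (fun x : Rd d => ∫⁻ y in s x, ENNReal.ofReal (kerH d σ x y))
      = fun x => ∫⁻ y in {y | (x, y) ∈ A}, ENNReal.ofReal (kerH d σ x y) := by
    funext x; rw [hs x]
  rw [h]
  exact measurable_lintegral_section d σ hA

lemma ereal_coe_of_ne_top {x : ℝ≥0∞} (h : x ≠ ⊤) :
    (x : EReal) = ((x.toReal : ℝ) : EReal) := by
  conv_lhs => rw [← ENNReal.ofReal_toReal h]
  rw [EReal.coe_ennreal_ofReal, max_eq_left ENNReal.toReal_nonneg]

end AuxPolar

open Set

theorem renormalized_energy_eq_H1_add_J1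
    (d : ℕ) (hd : 1 ≤ d) (σ : ℝ)
    (E : Set (Rd d)) (hE : MeasurableSet E) (hEfin : volume E < ⊤) :
    (0 < σ → σ < 1 →
      (HfunFull d σ E : EReal) - ((gamFull d σ * (volume E).toReal : ℝ) : EReal)
        = (Hfun d σ 1 E : EReal) + ((Jfun d σ 1 E : ℝ) : EReal)) ∧
    (-(d : ℝ) < σ → σ < 0 →
      ((JfunFull d σ E - gamFull d σ * (volume E).toReal : ℝ) : EReal)
        = (Hfun d σ 1 E : EReal) + ((Jfun d σ 1 E : ℝ) : EReal)) := by
  have hω := omegaD_pos d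
  -- common objects
  have hB : MeasurableSet {p : Rd d × Rd d | 1 ≤ dist p.1 p.2} :=
    measurableSet_le measurable_const (by fun_prop)
  set fS : Rd d → ℝ≥0∞ :=
    fun x => ∫⁻ y in E \ ball x 1, ENNReal.ofReal (kerH d σ x y) with hfSdef
  set fT : Rd d → ℝ≥0∞ :=
    fun x => ∫⁻ y in Eᶜ \ ball x 1, ENNReal.ofReal (kerH d σ x y) with hfTdef
  set fH : Rd d → ℝ≥0∞ :=
    fun x => ∫⁻ y in ball x 1 \ E, ENNReal.ofReal (kerH d σ x y) with hfHdef
  set fQ : Rd d → ℝ≥0∞ :=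
    fun x => ∫⁻ y in E ∩ ball x 1, ENNReal.ofReal (kerH d σ x y) with hfQdef
  have hmS : Measurable fS := by
    have h : ∀ x : Rd d, E \ ball x 1
        = {y | (x, y) ∈ (Prod.snd ⁻¹' E) ∩ {p : Rd d × Rd d | 1 ≤ dist p.1 p.2}} := by
      intro x; ext y
      simp only [mem_diff, mem_ball, mem_setOf_eq, mem_inter_iff, mem_preimage, not_lt]
      rw [dist_comm]
    rw [hfSdef]
    simp_rw [h]
    exact measurable_lintegral_section d σ ((measurable_snd hE).inter hB)
  have hmT : Measurable fT := by
    have h : ∀ x : Rd d, Eᶜ \ ball x 1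
        = {y | (x, y) ∈ (Prod.snd ⁻¹' Eᶜ) ∩ {p : Rd d × Rd d | 1 ≤ dist p.1 p.2}} := by
      intro x; ext y
      simp only [mem_diff, mem_ball, mem_setOf_eq, mem_inter_iff, mem_preimage, not_lt,
        mem_compl_iff]
      rw [dist_comm]
    rw [hfTdef]
    simp_rw [h]
    exact measurable_lintegral_section d σ ((measurable_snd hE.compl).inter hB)
  have hmH : Measurable fH := by
    have h : ∀ x : Rd d, ball x 1 \ E
        = {y | (x, y) ∈ (Prod.snd ⁻¹' Eᶜ) ∩ {p : Rd d × Rd d | 1 ≤ dist p.1 p.2}ᶜ} := by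
      intro x; ext y
      simp only [mem_diff, mem_ball, mem_setOf_eq, mem_inter_iff, mem_preimage,
        mem_compl_iff, not_le]
      rw [dist_comm]
      tauto
    rw [hfHdef]
    simp_rw [h]
    exact measurable_lintegral_section d σ ((measurable_snd hE.compl).inter hB.compl)
  have hmQ : Measurable fQ := by
    have h : ∀ x : Rd d, E ∩ ball x 1
        = {y | (x, y) ∈ (Prod.snd ⁻¹' E) ∩ {p : Rd d × Rd d | 1 ≤ dist p.1 p.2}ᶜ} := by
      intro x; ext y
      simp only [mem_inter_iff, mem_ball, mem_setOf_eq, mem_preimage, mem_compl_iff, not_le]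
      rw [dist_comm]
    rw [hfQdef]
    simp_rw [h]
    exact measurable_lintegral_section d σ ((measurable_snd hE).inter hB.compl)
  set S : ℝ≥0∞ := ∫⁻ x in E, fS x with hSdef
  set T : ℝ≥0∞ := ∫⁻ x in E, fT x with hTdef
  -- Jfun in terms of S
  have hinner : ∀ x : Rd d, ∫ y in E \ ball x 1, kerH d σ x y = (fS x).toReal := by
    intro x
    rw [hfSdef]
    exact MeasureTheory.integral_eq_lintegral_of_nonneg_ae
      (Filter.Eventually.of_forall fun y => kerH_nonneg d σ x y)
      ((kerH_meas_y d σ x).aestronglyMeasurable)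
  have hJofS : S ≠ ⊤ → Jfun d σ 1 E = -(S.toReal) := by
    intro hS
    have h1 : ∫ x in E, ∫ y in E \ ball x 1, kerH d σ x y = S.toReal := by
      simp_rw [hinner]
      exact integral_toReal hmS.aemeasurable (ae_lt_top hmS (by rw [← hSdef]; exact hS))
    rw [Jfun, h1]
  constructor
  · -- case 0 < σ < 1
    intro hσ0 hσ1
    have hγpos : 0 < gamFull d σ := div_pos (by positivity) hσ0
    have hkey1 : ∀ x : Rd d, fS x + fT x = ENNReal.ofReal (gamFull d σ) := by
      intro x
      have hsplit : (ball x 1)ᶜ = (E \ ball x 1) ∪ (Eᶜ \ ball x 1) := by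
        ext y; by_cases hy : y ∈ E <;> simp [hy]
      have hdisj : Disjoint (E \ ball x 1) (Eᶜ \ ball x 1) :=
        Set.disjoint_left.2 fun y h1 h2 => h2.1 h1.1
      rw [hfSdef, hfTdef, ← lintegral_union (hE.compl.diff measurableSet_ball) hdisj,
        ← hsplit, lintegral_kerH_compl_ball hd hσ0 x]
      rfl
    have hSTsum : S + T = ENNReal.ofReal (gamFull d σ) * volume E := by
      rw [hSdef, hTdef, ← lintegral_add_left hmS]
      calc ∫⁻ x in E, (fS x + fT x)
          = ∫⁻ x in E, ENNReal.ofReal (gamFull d σ) :=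
            setLIntegral_congr_fun hE (fun x _ => hkey1 x)
        _ = ENNReal.ofReal (gamFull d σ) * volume E := setLIntegral_const _ _
    have hfin : ENNReal.ofReal (gamFull d σ) * volume E ≠ ⊤ :=
      ENNReal.mul_ne_top ENNReal.ofReal_ne_top hEfin.ne
    have hST : S ≠ ⊤ ∧ T ≠ ⊤ := ENNReal.add_ne_top.1 (hSTsum ▸ hfin)
    have hkey2 : ∀ x : Rd d,
        (∫⁻ y in Eᶜ, ENNReal.ofReal (kerH d σ x y)) = fH x + fT x := by
      intro x
      have hsplit : (Eᶜ : Set (Rd d)) = (ball x 1 \ E) ∪ (Eᶜ \ ball x 1) := by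
        ext y; by_cases hy : y ∈ ball x 1 <;> by_cases hy2 : y ∈ E <;> simp [hy, hy2]
      have hdisj : Disjoint (ball x 1 \ E) (Eᶜ \ ball x 1) :=
        Set.disjoint_left.2 fun y h1 h2 => h2.2 h1.1
      have hhH : fH x = ∫⁻ y in ball x 1 \ E, ENNReal.ofReal (kerH d σ x y) := rfl
      have hhT : fT x = ∫⁻ y in Eᶜ \ ball x 1, ENNReal.ofReal (kerH d σ x y) := rfl
      rw [hhH, hhT, ← lintegral_union (hE.compl.diff measurableSet_ball) hdisj, ← hsplit]
    have hHFsplit : HfunFull d σ E = Hfun d σ 1 E + T := by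
      have h1 : HfunFull d σ E = ∫⁻ x in E, (fH x + fT x) :=
        setLIntegral_congr_fun hE (fun x _ => hkey2 x)
      rw [h1, lintegral_add_left hmH]
      rfl
    have hJ : Jfun d σ 1 E = -(S.toReal) := hJofS hST.1
    by_cases hH : Hfun d σ 1 E = ⊤
    · have hHFtop : HfunFull d σ E = ⊤ := by rw [hHFsplit, hH, top_add]
      rw [hHFtop, hH, EReal.coe_ennreal_top, EReal.top_sub_coe, EReal.top_add_coe]
    · have hHFne : HfunFull d σ E ≠ ⊤ := by
        rw [hHFsplit]; exact ENNReal.add_ne_top.2 ⟨hH, hST.2⟩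
      rw [ereal_coe_of_ne_top hHFne, ereal_coe_of_ne_top hH, hJ]
      norm_cast
      have h1 : (HfunFull d σ E).toReal = (Hfun d σ 1 E).toReal + T.toReal := by
        rw [hHFsplit, ENNReal.toReal_add hH hST.2]
      have h2 : gamFull d σ * (volume E).toReal = S.toReal + T.toReal := by
        have h3 := congrArg ENNReal.toReal hSTsum
        rw [ENNReal.toReal_add hST.1 hST.2, ENNReal.toReal_mul,
          ENNReal.toReal_ofReal hγpos.le] at h3
        linarith
      linarith
  · -- case -d < σ < 0
    intro hσd hσ0
    have hdσpos : (0:ℝ) < (d:ℝ) + σ := by linarith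
    set β : ℝ := d * omegaD d / (-σ) with hβdef
    have hβpos : 0 < β := div_pos (by positivity) (by linarith)
    have hgam : gamFull d σ = -β := by
      rw [hβdef, gamFull, div_neg, neg_neg]
    have hkey1 : ∀ x : Rd d, fQ x + fH x = ENNReal.ofReal β := by
      intro x
      have hsplit : ball x 1 = (E ∩ ball x 1) ∪ (ball x 1 \ E) := by
        ext y; by_cases hy : y ∈ E <;> simp [hy]
      have hdisj : Disjoint (E ∩ ball x 1) (ball x 1 \ E) :=
        Set.disjoint_left.2 fun y h1 h2 => h2.2 h1.1
      rw [hfQdef, hfHdef, ← lintegral_union (measurableSet_ball.diff hE) hdisj,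
        ← hsplit, lintegral_kerH_ball hd hσd hσ0 x]
    set Q : ℝ≥0∞ := ∫⁻ x in E, fQ x with hQdef
    have hQHsum : Q + Hfun d σ 1 E = ENNReal.ofReal β * volume E := by
      have hHfun : Hfun d σ 1 E = ∫⁻ x in E, fH x := rfl
      rw [hQdef, hHfun, ← lintegral_add_left hmQ]
      calc ∫⁻ x in E, (fQ x + fH x)
          = ∫⁻ x in E, ENNReal.ofReal β :=
            setLIntegral_congr_fun hE (fun x _ => hkey1 x)
        _ = ENNReal.ofReal β * volume E := setLIntegral_const _ _
    have hfin : ENNReal.ofReal β * volume E ≠ ⊤ :=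
      ENNReal.mul_ne_top ENNReal.ofReal_ne_top hEfin.ne
    have hQH : Q ≠ ⊤ ∧ Hfun d σ 1 E ≠ ⊤ := ENNReal.add_ne_top.1 (hQHsum ▸ hfin)
    -- S is finite
    have hfSle : ∀ x : Rd d, fS x ≤ volume E := by
      intro x
      calc fS x ≤ ∫⁻ _ in E \ ball x 1, 1 := by
            refine setLIntegral_mono' (hE.diff measurableSet_ball) fun y hy => ?_
            have h1y : 1 ≤ ‖x - y‖ := by
              have h2 := hy.2
              rw [mem_ball, dist_comm, dist_eq_norm, not_lt] at h2
              exact h2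
            calc ENNReal.ofReal (kerH d σ x y) ≤ ENNReal.ofReal 1 :=
                  ENNReal.ofReal_le_ofReal
                    (Real.rpow_le_one_of_one_le_of_nonpos h1y (by linarith))
              _ = 1 := ENNReal.ofReal_one
        _ = volume (E \ ball x 1) := setLIntegral_one _
        _ ≤ volume E := measure_mono diff_subset
    have hSfin : S ≠ ⊤ := by
      have hle : S ≤ volume E * volume E := by
        calc S ≤ ∫⁻ _ in E, volume E :=
              setLIntegral_mono' hE fun x _ => hfSle x
          _ = volume E * volume E := setLIntegral_const _ _
      exact (lt_of_le_of_lt hle (ENNReal.mul_lt_top hEfin hEfin)).ne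
    have hkey2 : ∀ x : Rd d,
        (∫⁻ y in E, ENNReal.ofReal (kerH d σ x y)) = fQ x + fS x := by
      intro x
      have hsplit : E = (E ∩ ball x 1) ∪ (E \ ball x 1) := by
        ext y; by_cases hy : y ∈ ball x 1 <;> by_cases hy2 : y ∈ E <;> simp [hy, hy2]
      have hdisj : Disjoint (E ∩ ball x 1) (E \ ball x 1) :=
        Set.disjoint_left.2 fun y h1 h2 => h2.2 h1.2
      have hhQ : fQ x = ∫⁻ y in E ∩ ball x 1, ENNReal.ofReal (kerH d σ x y) := rfl
      have hhS : fS x = ∫⁻ y in E \ ball x 1, ENNReal.ofReal (kerH d σ x y) := rfl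
      rw [hhQ, hhS, ← lintegral_union (hE.diff measurableSet_ball) hdisj, ← hsplit]
    set P : ℝ≥0∞ := ∫⁻ x in E, ∫⁻ y in E, ENNReal.ofReal (kerH d σ x y) with hPdef
    have hPsplit : P = Q + S := by
      rw [hPdef, hQdef, hSdef, ← lintegral_add_left hmQ]
      exact setLIntegral_congr_fun hE (fun x _ => hkey2 x)
    have hPfin : P ≠ ⊤ := by
      rw [hPsplit]; exact ENNReal.add_ne_top.2 ⟨hQH.1, hSfin⟩
    -- JfunFull in terms of P
    have hmP : Measurable fun x : Rd d => ∫⁻ y in E, ENNReal.ofReal (kerH d σ x y) :=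
      measurable_lintegral_section' d σ (measurable_snd hE) (fun _ => E)
        (fun x => Set.ext fun y => Iff.rfl)
    have hinnerP : ∀ x : Rd d,
        ∫ y in E, kerH d σ x y = (∫⁻ y in E, ENNReal.ofReal (kerH d σ x y)).toReal := by
      intro x
      exact MeasureTheory.integral_eq_lintegral_of_nonneg_ae
        (Filter.Eventually.of_forall fun y => kerH_nonneg d σ x y)
        ((kerH_meas_y d σ x).aestronglyMeasurable)
    have hJfull : JfunFull d σ E = -(P.toReal) := by
      have h1 : ∫ x in E, ∫ y in E, kerH d σ x y = P.toReal := by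
        simp_rw [hinnerP]
        exact integral_toReal hmP.aemeasurable (ae_lt_top hmP (by rw [← hPdef]; exact hPfin))
      rw [JfunFull, h1]
    have hJ : Jfun d σ 1 E = -(S.toReal) := hJofS hSfin
    rw [ereal_coe_of_ne_top hQH.2, hJ]
    norm_cast
    have h1 : P.toReal = Q.toReal + S.toReal := by
      rw [hPsplit, ENNReal.toReal_add hQH.1 hSfin]
    have h2 : β * (volume E).toReal = Q.toReal + (Hfun d σ 1 E).toReal := by
      have h3 := congrArg ENNReal.toReal hQHsum
      rw [ENNReal.toReal_add hQH.1 hQH.2, ENNReal.toReal_mul,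
        ENNReal.toReal_ofReal hβpos.le] at h3
      linarith
    rw [hJfull, hgam]
    linarith
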